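/- arXiv:math/9507203 — 8 statements merged into one kernel-verified Lean document; each statement's English description precedes it below -/
import Mathlib

section
/- Let G be a group in which commutation is transitive on nontrivial elements. Then the centralizer of any nontrivial element of G is a maximal abelian subgroup of G, and conversely every maximal abelian subgroup of a nontrivial such G is the centralizer of some nontrivial element. -/
/-- A maximal abelian subgroup: abelian and maximal among abelian subgroups. -/
def IsMaximalAbelian {G : Type*} [Group G] (M : Subgroup G) : Prop :=
  IsMulCommutative M ∧ ∀ N : Subgroup G, IsMulCommutative N → M ≤ N → N = M

/-- A subgroup `H` is malnormal (conjugately separated): `H ∩ H^x = 1` for `x ∉ H`. -/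
def IsMalnormal {G : Type*} [Group G] (H : Subgroup G) : Prop :=
  ∀ x : G, x ∉ H → ∀ g ∈ H, x⁻¹ * g * x ∈ H → g = 1

/-- A CSA-group: all maximal abelian subgroups are malnormal. -/
def IsCSA (G : Type*) [Group G] : Prop :=
  ∀ M : Subgroup G, IsMaximalAbelian M → IsMalnormal M

/-- Commutation is transitive on nontrivial elements. -/
def CommTrans (G : Type*) [Group G] : Prop :=
  ∀ a b c : G, a ≠ 1 → b ≠ 1 → c ≠ 1 → Commute a b → Commute b c → Commute a c

lemma cent_max {G : Type*} [Group G] (hG : CommTrans G) (g : G) (hg : g ≠ 1) :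
    IsMaximalAbelian (Subgroup.centralizer {g}) := by
  have hmem : ∀ h : G, h ∈ Subgroup.centralizer {g} ↔ Commute g h := by
    intro h
    simp [Subgroup.mem_centralizer_iff, Commute, SemiconjBy]
  constructor
  · constructor
    constructor
    rintro ⟨a, ha⟩ ⟨b, hb⟩
    ext
    simp only [Subgroup.coe_mul, Submonoid.mk_mul_mk]
    rw [hmem] at ha hb
    by_cases ha1 : a = 1
    · simp [ha1]
    by_cases hb1 : b = 1
    · simp [hb1]
    · exact hG a g b ha1 hg hb1 ha.symm hb
  · intro N hN hle
    apply le_antisymm _ hle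
    intro n hn
    rw [hmem]
    have hgN : g ∈ N := hle ((hmem g).2 (Commute.refl g))
    have := hN.1.1 ⟨g, hgN⟩ ⟨n, hn⟩
    exact Subtype.ext_iff.1 this

theorem stmt_3 {G : Type*} [Group G] (hG : CommTrans G) :
    (∀ g : G, g ≠ 1 → IsMaximalAbelian (Subgroup.centralizer {g})) ∧
    (Nontrivial G → ∀ M : Subgroup G, IsMaximalAbelian M →
      ∃ g : G, g ≠ 1 ∧ M = Subgroup.centralizer {g}) := by
  refine ⟨cent_max hG, ?_⟩
  intro hnt M hM
  obtain ⟨g, hgM, hg⟩ : ∃ g ∈ M, g ≠ 1 := by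
    by_contra h
    push_neg at h
    obtain ⟨x, hx⟩ := exists_ne (1 : G)
    have hbot : M = ⊥ := by
      ext m; simp only [Subgroup.mem_bot]
      exact ⟨fun hm => h m hm, fun hm => hm ▸ M.one_mem⟩
    have := hM.2 (Subgroup.centralizer {x}) (cent_max hG x hx).1
      (hbot ▸ bot_le)
    have hxc : x ∈ Subgroup.centralizer {x} := by
      simp [Subgroup.mem_centralizer_iff]
    rw [this, hbot, Subgroup.mem_bot] at hxc
    exact hx hxc
  refine ⟨g, hg, ?_⟩
  have hle : M ≤ Subgroup.centralizer {g} := by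
    intro m hm
    simp only [Subgroup.mem_centralizer_iff, Set.mem_singleton_iff, forall_eq]
    exact Subtype.ext_iff.1 (hM.1.1.1 ⟨g, hgM⟩ ⟨m, hm⟩)
  exact (hM.2 _ (cent_max hG g hg).1 hle).symm
end

section
/- Let G be a torsion-free group in which commutation is transitive on nontrivial elements. If xⁿ = yⁿ for some nonzero integer n, then x = y. -/
lemma tf_zpow {G : Type*} [Group G] (htf : ∀ g : G, g ≠ 1 → ¬IsOfFinOrder g)
    (g : G) (n : ℤ) (hn : n ≠ 0) (hg : g ^ n = 1) : g = 1 := by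
  by_contra hg1
  have hpow : g ^ n.natAbs = 1 := by
    rcases Int.natAbs_eq n with he | he
    · rw [he] at hg; rwa [← zpow_natCast]
    · rw [he, zpow_neg, inv_eq_one] at hg; rwa [← zpow_natCast]
  exact htf g hg1 (isOfFinOrder_iff_pow_eq_one.mpr
    ⟨n.natAbs, Nat.pos_of_ne_zero (by simpa [Int.natAbs_ne_zero] using hn), hpow⟩)

theorem stmt_5 {G : Type*} [Group G] (htf : ∀ g : G, g ≠ 1 → ¬IsOfFinOrder g)
    (hG : CommTrans G) (x y : G) (n : ℤ) (hn : n ≠ 0)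
    (h : x ^ n = y ^ n) : x = y := by
  by_cases hy : y = 1
  · subst hy
    simpa using tf_zpow htf x n hn (by simpa using h)
  by_cases hx : x = 1
  · subst hx
    exact (tf_zpow htf y n hn (by simpa using h.symm)).symm
  have hyn : y ^ n ≠ 1 := fun hh => hy (tf_zpow htf y n hn hh)
  have c1 : Commute x (y ^ n) := h ▸ Commute.zpow_right (Commute.refl x) n
  have c2 : Commute (y ^ n) y := Commute.zpow_left (Commute.refl y) n
  have cxy : Commute x y := hG x (y ^ n) y hx hyn hy c1 c2
  have : (x * y⁻¹) ^ n = 1 := by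
    rw [(cxy.inv_right).mul_zpow, inv_zpow, h, mul_inv_cancel]
  have := tf_zpow htf _ n hn this
  exact mul_inv_eq_one.mp this
end

section
/- If G is a nonabelian group in which commutation is transitive on nontrivial elements, then G is not isomorphic to a direct product H × K with both H and K nontrivial. -/
theorem stmt_7 {G : Type*} [Group G] (hna : ¬∀ a b : G, a * b = b * a)
    (hG : CommTrans G) :
    ∀ (H K : Type*) [Group H] [Group K], Nontrivial H → Nontrivial K →
      ¬Nonempty (G ≃* H × K) := by
  intro H K _ _ hH hK ⟨e⟩
  obtain ⟨h, hh⟩ := exists_ne (1 : H)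
  obtain ⟨k, hk⟩ := exists_ne (1 : K)
  -- Transport CommTrans along e
  have hT : CommTrans (H × K) := by
    intro a b c ha hb hc hab hbc
    have key : Commute (e.symm a) (e.symm c) := by
      refine hG (e.symm a) (e.symm b) (e.symm c) ?_ ?_ ?_ ?_ ?_
      · simpa using ha
      · simpa using hb
      · simpa using hc
      · have : e.symm (a * b) = e.symm (b * a) := congrArg e.symm hab
        simpa [map_mul, Commute, SemiconjBy] using this
      · have : e.symm (b * c) = e.symm (c * b) := congrArg e.symm hbc
        simpa [map_mul, Commute, SemiconjBy] using this
    have : e (e.symm a * e.symm c) = e (e.symm c * e.symm a) := congrArg e key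
    simpa [map_mul, Commute, SemiconjBy] using this
  -- every nontrivial a in H × K commutes with some nontrivial (1, y)
  have step : ∀ a : H × K, a ≠ 1 → ∃ y : K, y ≠ 1 ∧ Commute a (1, y) := by
    intro a ha
    by_cases h2 : a.2 = 1
    · have h1 : a.1 ≠ 1 := by
        intro h1; exact ha (Prod.ext h1 h2)
      exact ⟨k, hk, by ext <;> simp [Commute, SemiconjBy, h2]⟩
    · exact ⟨a.2, h2, by ext <;> simp [Commute, SemiconjBy, mul_comm]⟩
  -- hence all nontrivial elements commute
  have all : ∀ a b : H × K, a * b = b * a := by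
    intro a b
    by_cases ha : a = 1; · simp [ha]
    by_cases hb : b = 1; · simp [hb]
    obtain ⟨ya, hya, hca⟩ := step a ha
    obtain ⟨yb, hyb, hcb⟩ := step b hb
    have n1 : ((1 : H), ya) ≠ 1 := by
      simp [Prod.ext_iff, hya]
    have n2 : ((h, 1) : H × K) ≠ 1 := by
      simp [Prod.ext_iff, hh]
    have n3 : ((1 : H), yb) ≠ 1 := by
      simp [Prod.ext_iff, hyb]
    have c1 : Commute ((1 : H), ya) ((h, (1 : K))) := by
      ext <;> simp
    have c2 : Commute ((h, (1 : K))) ((1 : H), yb) := by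
      ext <;> simp
    have : Commute a ((h, (1:K))) := hT a (1, ya) (h, 1) ha n1 n2 hca c1
    have : Commute a ((1:H), yb) := hT a (h, 1) (1, yb) ha n2 n3 this c2
    exact hT a (1, yb) b ha n3 hb this hcb.symm
  exact hna fun a b => by
    have : e (a * b) = e (b * a) := by simp [map_mul, all (e a) (e b)]
    exact e.injective this
end

section
/- A subgroup of a CSA-group is a CSA-group. -/
/-- Every abelian subgroup is contained in a maximal abelian subgroup (Zorn). -/
lemma exists_maximalAbelian_ge {G : Type*} [Group G] (M : Subgroup G)
    (hM : IsMulCommutative M) : ∃ M' : Subgroup G, M ≤ M' ∧ IsMaximalAbelian M' := by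
  obtain ⟨M', hMM', hmax⟩ := zorn_le_nonempty₀
    {N : Subgroup G | IsMulCommutative N}
    (fun c hcs hc y hy => by
      refine ⟨sSup c, ?_, fun z hz => le_sSup hz⟩
      have hdir : DirectedOn (· ≤ ·) c := hc.directedOn
      constructor
      constructor
      rintro ⟨a, ha⟩ ⟨b, hb⟩
      obtain ⟨A, hA, haA⟩ := (Subgroup.mem_sSup_of_directedOn ⟨y, hy⟩ hdir).1 ha
      obtain ⟨B, hB, hbB⟩ := (Subgroup.mem_sSup_of_directedOn ⟨y, hy⟩ hdir).1 hb
      obtain ⟨C, hC, hAC, hBC⟩ := hdir A hA B hB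
      have := (hcs hC).is_comm.comm ⟨a, hAC haA⟩ ⟨b, hBC hbB⟩
      have h2 : a * b = b * a := Subtype.ext_iff.1 this
      exact Subtype.ext h2)
    M hM
  exact ⟨M', hMM', hmax.1, fun N hN hle => le_antisymm (hmax.2 hN hle) hle⟩

theorem stmt_8 {G : Type*} [Group G] (hG : IsCSA G) (H : Subgroup G) :
    IsCSA H := by
  intro M hM x hx g hg hconj
  -- image of M in G is commutative
  have hMImage : IsMulCommutative (M.map H.subtype) := by
    constructor
    constructor
    rintro ⟨a, ha⟩ ⟨b, hb⟩
    obtain ⟨a', ha', rfl⟩ := ha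
    obtain ⟨b', hb', rfl⟩ := hb
    have := hM.1.is_comm.comm ⟨a', ha'⟩ ⟨b', hb'⟩
    ext
    exact congrArg (H.subtype ∘ Subtype.val) this
  obtain ⟨M', hle, hM'max⟩ := exists_maximalAbelian_ge _ hMImage
  -- pull back M' to H
  have hK : IsMulCommutative (M'.comap H.subtype) := by
    constructor
    constructor
    rintro ⟨a, ha⟩ ⟨b, hb⟩
    have := hM'max.1.is_comm.comm ⟨H.subtype a, ha⟩ ⟨H.subtype b, hb⟩
    have h2 : (a : G) * b = b * a := congrArg Subtype.val this
    ext
    exact congrArg Subtype.val (Subtype.ext h2 : a * b = b * a)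
  have hMK : M ≤ M'.comap H.subtype := fun m hm =>
    hle ⟨m, hm, rfl⟩
  have hKM : M'.comap H.subtype = M := hM.2 _ hK hMK
  have hxM' : (x : G) ∉ M' := fun h => hx (hKM ▸ (show x ∈ M'.comap H.subtype from h))
  have hgM' : (g : G) ∈ M' := hle ⟨g, hg, rfl⟩
  have hconjM' : (x : G)⁻¹ * g * x ∈ M' := hle ⟨x⁻¹ * g * x, hconj, rfl⟩
  have := hG M' hM'max x hxM' g hgM' hconjM'
  exact Subtype.ext this
end

section
/- Let G be a torsion-free group in which the centralizer of every nontrivial element is infinite cyclic. Then G is a CSA-group. -/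
theorem stmt_13 {G : Type*} [Group G] (htf : ∀ g : G, g ≠ 1 → ¬IsOfFinOrder g)
    (hcyc : ∀ g : G, g ≠ 1 → ∃ z : G, Subgroup.centralizer {g} = Subgroup.zpowers z) :
    IsCSA G := by
  -- Key: for any maximal abelian M and nontrivial g ∈ M, centralizer {g} = M.
  have key : ∀ M : Subgroup G, IsMaximalAbelian M → ∀ g : G, g ≠ 1 → g ∈ M →
      Subgroup.centralizer {g} = M := by
    intro M hM g hg hgM
    obtain ⟨z, hz⟩ := hcyc g hg
    have hcomm : IsMulCommutative (Subgroup.centralizer ({g} : Set G)) := by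
      rw [hz]; infer_instance
    refine hM.2 _ hcomm ?_
    intro m hm
    rw [Subgroup.mem_centralizer_singleton_iff]
    haveI := hM.1
    exact Subgroup.mul_comm_of_mem_isMulCommutative M hm hgM
  intro M hM x hx g hgM hconj
  by_contra hg
  have hMg := key M hM g hg hgM
  obtain ⟨z, hz⟩ := hcyc g hg
  have hzM : Subgroup.zpowers z = M := hz ▸ hMg
  have hzne : z ≠ 1 := by
    rintro rfl
    apply hg
    have : g ∈ Subgroup.zpowers (1 : G) := hz ▸ Subgroup.mem_centralizer_singleton_iff.mpr rfl
    simpa [Subgroup.mem_zpowers_iff] using this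
  have hzinj : Function.Injective fun n : ℤ => z ^ n :=
    injective_zpow_iff_not_isOfFinOrder.mpr (htf z hzne)
  have hzMem : z ∈ M := hzM ▸ Subgroup.mem_zpowers z
  have hMz : Subgroup.centralizer {z} = M := key M hM z hzne hzMem
  set h := x⁻¹ * g * x with hh
  have hhne : h ≠ 1 := by
    intro h1
    apply hg
    have hgx : g = x * h * x⁻¹ := by rw [hh]; group
    rw [hgx, h1]; group
  have hMh : Subgroup.centralizer {h} = M := key M hM h hhne hconj
  -- z commutes with g (both in M)
  haveI := hM.1
  have hzg : z * g = g * z := Subgroup.mul_comm_of_mem_isMulCommutative M hzMem hgM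
  have hzh : z * h = h * z := Subgroup.mul_comm_of_mem_isMulCommutative M hzMem hconj
  -- x⁻¹ z x centralizes h = x⁻¹ g x, so x⁻¹ z x ∈ M
  have hzconj : x⁻¹ * z * x ∈ M := by
    rw [← hMh, Subgroup.mem_centralizer_singleton_iff, hh]
    calc x⁻¹ * z * x * (x⁻¹ * g * x) = x⁻¹ * (z * g) * x := by group
      _ = x⁻¹ * (g * z) * x := by rw [hzg]
      _ = x⁻¹ * g * x * (x⁻¹ * z * x) := by group
  obtain ⟨k, hk⟩ := (hzM ▸ hzconj : x⁻¹ * z * x ∈ Subgroup.zpowers z)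
  replace hk : z ^ k = x⁻¹ * z * x := hk
  -- x z x⁻¹ centralizes g = x h x⁻¹, so x z x⁻¹ ∈ M
  have hzconj' : x * z * x⁻¹ ∈ M := by
    rw [← hMg, Subgroup.mem_centralizer_singleton_iff]
    have hgx : g = x * h * x⁻¹ := by rw [hh]; group
    rw [hgx]
    calc x * z * x⁻¹ * (x * h * x⁻¹) = x * (z * h) * x⁻¹ := by group
      _ = x * (h * z) * x⁻¹ := by rw [hzh]
      _ = x * h * x⁻¹ * (x * z * x⁻¹) := by group
  obtain ⟨m, hm⟩ := (hzM ▸ hzconj' : x * z * x⁻¹ ∈ Subgroup.zpowers z)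
  replace hm : z ^ m = x * z * x⁻¹ := hm
  have cz : ∀ (n : ℤ), (x⁻¹ * z * x) ^ n = x⁻¹ * z ^ n * x := by
    intro n
    have := conj_zpow (i := n) (a := x⁻¹) (b := z)
    simpa using this
  -- z = z^(k*m)
  have hkm : z ^ (k * m) = z ^ (1 : ℤ) := by
    have hzz : z = x⁻¹ * (x * z * x⁻¹) * x := by group
    calc z ^ (k * m) = (z ^ k) ^ m := by rw [zpow_mul]
      _ = (x⁻¹ * z * x) ^ m := by rw [hk]
      _ = x⁻¹ * z ^ m * x := cz m
      _ = x⁻¹ * (x * z * x⁻¹) * x := by rw [hm]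
      _ = z ^ (1 : ℤ) := by rw [← hzz]; simp
  have hkm1 : k * m = 1 := hzinj hkm
  rcases Int.isUnit_iff.mp (IsUnit.of_mul_eq_one m hkm1) with hk1 | hk1
  · -- k = 1 : x commutes with z, so x ∈ M, contradiction
    apply hx
    rw [← hMz, Subgroup.mem_centralizer_singleton_iff]
    have : x⁻¹ * z * x = z := by rw [← hk, hk1, zpow_one]
    calc x * z = x * (x⁻¹ * z * x) := by rw [this]
      _ = z * x := by group
  · -- k = -1 : x⁻¹ z x = z⁻¹
    have hkz : x⁻¹ * z * x = z⁻¹ := by rw [← hk, hk1]; simp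
    have e2 : z * x = x * z⁻¹ := by
      calc z * x = x * (x⁻¹ * z * x) := by group
        _ = x * z⁻¹ := by rw [hkz]
    have e1 : x * z = z⁻¹ * x := by
      calc x * z = z⁻¹ * (z * x) * z := by group
        _ = z⁻¹ * (x * z⁻¹) * z := by rw [e2]
        _ = z⁻¹ * x := by group
    -- x² commutes with z, hence x² ∈ M = zpowers z
    have hx2 : x * x ∈ Subgroup.zpowers z := by
      rw [hzM, ← hMz, Subgroup.mem_centralizer_singleton_iff]
      calc x * x * z = x * (x * z) := by group
        _ = x * (z⁻¹ * x) := by rw [e1]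
        _ = (x * z⁻¹) * x := by group
        _ = (z * x) * x := by rw [← e2]
        _ = z * (x * x) := by group
    obtain ⟨n, hn⟩ := hx2
    replace hn : z ^ n = x * x := hn
    -- conjugating x² by x fixes it, but sends zⁿ to z⁻ⁿ, so n = 0
    have hneg : z ^ n = z ^ (-n) := by
      have h1 : x⁻¹ * z ^ n * x = (z⁻¹) ^ n := by
        rw [← cz n, hkz]
      have h2 : x⁻¹ * z ^ n * x = z ^ n := by
        rw [hn]; group
      rw [← h2, h1, zpow_neg, ← inv_zpow]
    have hn0 : n = 0 := by
      have := hzinj hneg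
      omega
    have hx1 : x * x = 1 := by rw [← hn, hn0, zpow_zero]
    by_cases hxe : x = 1
    · exact hx (hxe ▸ M.one_mem)
    · exact htf x hxe (isOfFinOrder_iff_pow_eq_one.mpr
        ⟨2, by norm_num, by rw [pow_two]; exact hx1⟩)
end

section
/- Every torsion-free virtually cyclic group is infinite cyclic or trivial. -/
open Subgroup
open scoped commutatorElement

section Aux

variable {G : Type*} [Group G]

/-- Torsion-freeness passes to subgroups. -/
lemma aux_tf_subgroup (htf : ∀ g : G, g ≠ 1 → ¬IsOfFinOrder g) (H : Subgroup G) :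
    ∀ x : ↥H, x ≠ 1 → ¬IsOfFinOrder x := by
  intro x hx hfin
  have h1 : (x : G) ≠ 1 := fun h => hx (Subtype.ext h)
  have h2 : orderOf x ≠ 0 := fun h0 => (orderOf_eq_zero_iff.1 h0) hfin
  rw [← Subgroup.orderOf_coe] at h2
  exact htf _ h1 (of_not_not fun hn => h2 (orderOf_eq_zero_iff.2 hn))

/-- If a conjugate (both ways) of an infinite-order element `z` is a power of `z`,
then conjugation sends `z` to `z` or `z⁻¹`. -/
lemma aux_conj_dichotomy {z g : G} (hz : ¬IsOfFinOrder z)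
    (h1 : ∃ k : ℤ, z ^ k = g * z * g⁻¹) (h2 : ∃ m : ℤ, z ^ m = g⁻¹ * z * g) :
    g * z * g⁻¹ = z ∨ g * z * g⁻¹ = z⁻¹ := by
  obtain ⟨k, hk⟩ := h1
  obtain ⟨m, hm⟩ := h2
  have hinj : Function.Injective fun n : ℤ => z ^ n :=
    injective_zpow_iff_not_isOfFinOrder.2 hz
  have hzmk : z ^ (m * k) = z ^ (1 : ℤ) := by
    calc z ^ (m * k) = (z ^ m) ^ k := zpow_mul z m k
      _ = (g⁻¹ * z * g) ^ k := by rw [hm]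
      _ = g⁻¹ * z ^ k * g := by
          simpa [inv_inv] using (conj_zpow (i := k) (a := g⁻¹) (b := z))
      _ = g⁻¹ * (g * z * g⁻¹) * g := by rw [hk]
      _ = z ^ (1 : ℤ) := by group
  have hmk : m * k = 1 := hinj hzmk
  have hku : IsUnit k := IsUnit.of_mul_eq_one m (by rw [mul_comm]; exact hmk)
  rcases Int.isUnit_iff.1 hku with h | h
  · left; rw [← hk, h, zpow_one]
  · right; rw [← hk, h, zpow_neg_one]

lemma aux_commutator_mul_central_left (x y w : G) (hw : w ∈ Subgroup.center G) :
    ⁅x * w, y⁆ = ⁅x, y⁆ := by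
  have hc : w * y = y * w := (Subgroup.mem_center_iff.1 hw y).symm
  simp only [commutatorElement_def, mul_inv_rev, mul_assoc]
  rw [← mul_assoc w y, hc, mul_assoc y w, mul_inv_cancel_left]

lemma aux_commutator_mul_central_right (x y w : G) (hw : w ∈ Subgroup.center G) :
    ⁅x, y * w⁆ = ⁅x, y⁆ := by
  have hc : w * x⁻¹ = x⁻¹ * w := (Subgroup.mem_center_iff.1 hw x⁻¹).symm
  simp only [commutatorElement_def, mul_inv_rev, mul_assoc]
  rw [← mul_assoc w x⁻¹, hc, mul_assoc x⁻¹ w, mul_inv_cancel_left]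

/-- A torsion-free group whose center has finite index is abelian. -/
lemma aux_comm_of_center_finiteIndex {K : Type*} [Group K]
    (tf : ∀ g : K, g ≠ 1 → ¬IsOfFinOrder g) (hfi : (Subgroup.center K).FiniteIndex) :
    ∀ a b : K, a * b = b * a := by
  haveI := hfi
  haveI : Finite (K ⧸ Subgroup.center K) := inferInstance
  -- decompose an element as (representative of its coset) * central element
  have hdec : ∀ a : K, ∃ w ∈ Subgroup.center K,
      a = ((QuotientGroup.mk a : K ⧸ Subgroup.center K)).out * w := by
    intro a
    set a' := ((QuotientGroup.mk a : K ⧸ Subgroup.center K)).out with ha'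
    have h : (QuotientGroup.mk a' : K ⧸ Subgroup.center K) = QuotientGroup.mk a :=
      QuotientGroup.out_eq' _
    have hw : a'⁻¹ * a ∈ Subgroup.center K := (QuotientGroup.eq).1 h
    exact ⟨a'⁻¹ * a, hw, by rw [mul_inv_cancel_left]⟩
  haveI : Finite (commutatorSet K) := by
    have hsurj : Function.Surjective
        (fun p : (K ⧸ Subgroup.center K) × (K ⧸ Subgroup.center K) =>
          (⟨⁅p.1.out, p.2.out⁆, p.1.out, p.2.out, rfl⟩ : commutatorSet K)) := by
      rintro ⟨x, a, b, rfl⟩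
      refine ⟨(QuotientGroup.mk a, QuotientGroup.mk b), ?_⟩
      obtain ⟨w, hw, hwa⟩ := hdec a
      obtain ⟨v, hv, hvb⟩ := hdec b
      apply Subtype.ext
      show ⁅((QuotientGroup.mk a : K ⧸ Subgroup.center K)).out,
        ((QuotientGroup.mk b : K ⧸ Subgroup.center K)).out⁆ = ⁅a, b⁆
      conv_rhs => rw [hwa, hvb]
      rw [aux_commutator_mul_central_left _ _ _ hw, aux_commutator_mul_central_right _ _ _ hv]
    exact Finite.of_surjective _ hsurj
  haveI : Finite (_root_.commutator K) := inferInstance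
  intro a b
  have hmem : ⁅a, b⁆ ∈ _root_.commutator K := by
    rw [_root_.commutator]
    exact Subgroup.commutator_mem_commutator (Subgroup.mem_top a) (Subgroup.mem_top b)
  have h1 : ⁅a, b⁆ = 1 := by
    by_contra hne
    apply tf _ hne
    have hfo : IsOfFinOrder (⟨⁅a, b⁆, hmem⟩ : _root_.commutator K) := isOfFinOrder_of_finite _
    have h0 : orderOf (⟨⁅a, b⁆, hmem⟩ : _root_.commutator K) ≠ 0 :=
      fun h0 => (orderOf_eq_zero_iff.1 h0) hfo
    rw [← Subgroup.orderOf_coe] at h0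
    exact of_not_not fun hn => h0 (orderOf_eq_zero_iff.2 hn)
  exact (commutatorElement_eq_one_iff_commute.1 h1).eq

/-- A torsion-free abelian group with an infinite cyclic subgroup of finite index is cyclic. -/
lemma aux_cyclic {K : Type*} [Group K] (comm : ∀ a b : K, a * b = b * a)
    (tf : ∀ g : K, g ≠ 1 → ¬IsOfFinOrder g) (z : K) (hz : ¬IsOfFinOrder z)
    (hfi : (Subgroup.zpowers z).FiniteIndex) : IsCyclic K := by
  haveI := hfi
  haveI : (Subgroup.zpowers z).Normal := by
    refine ⟨fun x hx g => ?_⟩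
    have : g * x * g⁻¹ = x := by rw [comm g x, mul_assoc, mul_inv_cancel, mul_one]
    rwa [this]
  haveI : Finite (K ⧸ Subgroup.zpowers z) := inferInstance
  set n := (Subgroup.zpowers z).index with hn
  have hn0 : n ≠ 0 := hfi.index_ne_zero
  have hpow : ∀ c : K, c ^ n ∈ Subgroup.zpowers z := by
    intro c
    rw [← QuotientGroup.eq_one_iff]
    have h1 : ((c ^ n : K) : K ⧸ Subgroup.zpowers z)
        = ((c : K ⧸ Subgroup.zpowers z)) ^ n := by
      exact_mod_cast rfl
    rw [h1, hn, Subgroup.index_eq_card]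
    exact pow_card_eq_one'
  choose kk hkk using fun c => Subgroup.mem_zpowers_iff.1 (hpow c)
  have hinj : Function.Injective fun k : ℤ => z ^ k :=
    injective_zpow_iff_not_isOfFinOrder.2 hz
  let f : K →* Multiplicative ℤ :=
  { toFun := fun c => Multiplicative.ofAdd (kk c)
    map_one' := by
      have h : z ^ kk 1 = z ^ (0 : ℤ) := by rw [hkk 1, one_pow, zpow_zero]
      simpa using congrArg Multiplicative.ofAdd (hinj h)
    map_mul' := by
      intro a b
      have hc : Commute a b := comm a b
      have h : z ^ kk (a * b) = z ^ (kk a + kk b) := by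
        rw [hkk, zpow_add, hkk, hkk, hc.mul_pow]
      simpa [ofAdd_add] using congrArg Multiplicative.ofAdd (hinj h) }
  have hfinj : Function.Injective f := by
    intro a b hab
    have hk : kk a = kk b := by simpa [f] using hab
    have hpw : a ^ n = b ^ n := by rw [← hkk a, ← hkk b, hk]
    by_contra hne
    have h1 : a * b⁻¹ ≠ 1 := by
      intro h
      exact hne (by rw [← mul_inv_cancel b] at h; exact mul_right_cancel h)
    apply tf _ h1
    refine isOfFinOrder_iff_pow_eq_one.2 ⟨n, Nat.pos_of_ne_zero hn0, ?_⟩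
    have hc : Commute a b⁻¹ := comm a b⁻¹
    rw [hc.mul_pow, inv_pow, hpw, mul_inv_cancel]
  have e := MonoidHom.ofInjective hfinj
  exact isCyclic_of_surjective e.symm e.symm.surjective

end Aux

theorem stmt_14 {G : Type*} [Group G] (htf : ∀ g : G, g ≠ 1 → ¬IsOfFinOrder g)
    (hvc : ∃ H : Subgroup G, IsCyclic H ∧ H.FiniteIndex) :
    (∀ x : G, x = 1) ∨ Nonempty (G ≃* Multiplicative ℤ) := by
  classical
  by_cases hG : ∀ x : G, x = 1
  · exact Or.inl hG
  push_neg at hG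
  obtain ⟨x₀, hx₀⟩ := hG
  right
  obtain ⟨H, hHc, hHf⟩ := hvc
  haveI := hHf
  haveI := hHc
  haveI : Infinite G := by
    by_contra hfin
    rw [not_infinite_iff_finite] at hfin
    exact htf x₀ hx₀ (isOfFinOrder_of_finite x₀)
  set N := H.normalCore with hNdef
  haveI hNfi : N.FiniteIndex := H.finiteIndex_normalCore
  haveI hNn : N.Normal := Subgroup.normalCore_normal H
  haveI hNc : IsCyclic ↥N := Subgroup.isCyclic_of_le H.normalCore_le
  haveI : Infinite ↥N := by
    by_contra hfin
    rw [not_infinite_iff_finite] at hfin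
    haveI : Finite (G ⧸ N) := inferInstance
    have : Finite G := Finite.of_equiv _ (Subgroup.groupEquivQuotientProdSubgroup (s := N)).symm
    exact not_finite G
  obtain ⟨zz, hzz⟩ := IsCyclic.exists_generator (α := ↥N)
  set z : G := (zz : G) with hzdef
  have hzN : z ∈ N := zz.2
  have hNz : ∀ x ∈ N, ∃ k : ℤ, z ^ k = x := by
    intro x hx
    obtain ⟨k, hk⟩ := Subgroup.mem_zpowers_iff.1 (hzz ⟨x, hx⟩)
    refine ⟨k, ?_⟩
    have := congrArg (Subtype.val) hk
    simpa [hzdef] using this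
  have hz1 : z ≠ 1 := by
    intro h
    obtain ⟨a, b, hab⟩ := exists_pair_ne ↥N
    have h1 : ∀ x : ↥N, x = 1 := by
      intro x
      obtain ⟨k, hk⟩ := hNz x x.2
      exact Subtype.ext (by rw [← hk, h, one_zpow]; simp)
    exact hab (by rw [h1 a, h1 b])
  have hzo : ¬IsOfFinOrder z := htf z hz1
  have hNzp : N = Subgroup.zpowers z := by
    refine le_antisymm (fun x hx => ?_) (Subgroup.zpowers_le.2 hzN)
    obtain ⟨k, hk⟩ := hNz x hx
    exact ⟨k, hk⟩
  have hconj : ∀ g : G, g * z * g⁻¹ = z ∨ g * z * g⁻¹ = z⁻¹ := by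
    intro g
    refine aux_conj_dichotomy hzo ?_ ?_
    · exact hNz _ (hNn.conj_mem z hzN g)
    · have := hNn.conj_mem z hzN g⁻¹
      rw [inv_inv] at this
      exact hNz _ this
  set C := Subgroup.centralizer ({z} : Set G) with hCdef
  have hmemC : ∀ c : G, c ∈ C ↔ z * c = c * z := by
    intro c
    rw [hCdef, Subgroup.mem_centralizer_iff]
    simp
  have hzC : z ∈ C := (hmemC z).2 rfl
  have hzpC : Subgroup.zpowers z ≤ C := Subgroup.zpowers_le.2 hzC
  -- the center of C has finite index in C
  haveI hsub : ((Subgroup.zpowers z).subgroupOf C).FiniteIndex := by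
    haveI : (Subgroup.zpowers z).FiniteIndex := hNzp ▸ hNfi
    exact Subgroup.instFiniteIndex_subgroupOf _ _
  have hle : (Subgroup.zpowers z).subgroupOf C ≤ Subgroup.center ↥C := by
    intro x hx
    rw [Subgroup.mem_subgroupOf] at hx
    obtain ⟨k, hk⟩ := Subgroup.mem_zpowers_iff.1 hx
    rw [Subgroup.mem_center_iff]
    intro g
    apply Subtype.ext
    show (g : G) * x = x * (g : G)
    have hgz : Commute z (g : G) := (hmemC (g : G)).1 g.2
    have : Commute (z ^ k) (g : G) := hgz.zpow_left k
    rw [hk] at this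
    exact this.symm.eq
  haveI hcfi : (Subgroup.center ↥C).FiniteIndex := Subgroup.finiteIndex_of_le hle
  have hCcomm : ∀ a b : ↥C, a * b = b * a :=
    aux_comm_of_center_finiteIndex (aux_tf_subgroup htf C) hcfi
  -- C is cyclic
  have hzC' : (⟨z, hzC⟩ : ↥C) ≠ 1 := by
    intro h
    exact hz1 (by simpa using congrArg Subtype.val h)
  have hzoC : ¬IsOfFinOrder (⟨z, hzC⟩ : ↥C) := aux_tf_subgroup htf C _ hzC'
  have hzpC' : Subgroup.zpowers (⟨z, hzC⟩ : ↥C) = (Subgroup.zpowers z).subgroupOf C := by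
    ext x
    rw [Subgroup.mem_subgroupOf, Subgroup.mem_zpowers_iff, Subgroup.mem_zpowers_iff]
    constructor
    · rintro ⟨k, hk⟩
      exact ⟨k, by simpa using congrArg Subtype.val hk⟩
    · rintro ⟨k, hk⟩
      exact ⟨k, Subtype.ext (by simpa using hk)⟩
  haveI hCcyc : IsCyclic ↥C := by
    refine aux_cyclic hCcomm (aux_tf_subgroup htf C) ⟨z, hzC⟩ hzoC ?_
    rw [hzpC']
    exact hsub
  obtain ⟨ww, hww⟩ := IsCyclic.exists_generator (α := ↥C)
  set w : G := (ww : G) with hwdef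
  have hwC : w ∈ C := ww.2
  have hCw : ∀ c ∈ C, ∃ k : ℤ, w ^ k = c := by
    intro c hc
    obtain ⟨k, hk⟩ := Subgroup.mem_zpowers_iff.1 (hww ⟨c, hc⟩)
    exact ⟨k, by simpa [hwdef] using congrArg Subtype.val hk⟩
  obtain ⟨j, hj⟩ := hCw z hzC
  have hw1 : w ≠ 1 := by
    intro h
    exact hz1 (by rw [← hj, h, one_zpow])
  have hwo : ¬IsOfFinOrder w := htf w hw1
  -- every element centralizes z
  have hCtop : ∀ g : G, g ∈ C := by
    intro g
    rcases hconj g with hgood | hbad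
    · rw [hmemC]
      have : g * z = z * g := by
        have := congrArg (· * g) hgood
        simpa [mul_assoc] using this
      exact this.symm
    · exfalso
      -- basic consequences of  g z g⁻¹ = z⁻¹
      have hzg : z * g = g * z⁻¹ := by
        have h2 : g * z⁻¹ * g⁻¹ = z := by
          have := congrArg (·⁻¹) hbad
          simpa [mul_inv_rev, mul_assoc] using this
        have := congrArg (· * g) h2
        simpa [mul_assoc] using this.symm
      have hzg' : z⁻¹ * g = g * z := by
        have := congrArg (· * g) hbad
        simpa [mul_assoc] using this.symm
      -- conjugation by g and g⁻¹ preserves C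
      have hgC : ∀ c ∈ C, g * c * g⁻¹ ∈ C := by
        intro c hc
        rw [hmemC]
        have hcz : z * c = c * z := (hmemC c).1 hc
        have hcz' : z⁻¹ * c = c * z⁻¹ := by
          have := congrArg (fun t => z⁻¹ * t * z⁻¹) hcz
          simpa [mul_assoc] using this.symm
        calc z * (g * c * g⁻¹) = (z * g) * c * g⁻¹ := by simp [mul_assoc]
          _ = g * (z⁻¹ * c) * g⁻¹ := by rw [hzg]; simp [mul_assoc]
          _ = g * c * (z⁻¹ * g⁻¹) := by rw [hcz']; simp [mul_assoc]
          _ = g * c * (g⁻¹ * z) := by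
              congr 1
              have h' := congrArg (·⁻¹) hzg'
              simp only [mul_inv_rev, inv_inv] at h'
              exact h'.symm
          _ = (g * c * g⁻¹) * z := by simp [mul_assoc]
      have hg'C : ∀ c ∈ C, g⁻¹ * c * g ∈ C := by
        intro c hc
        rw [hmemC]
        have hcz : z * c = c * z := (hmemC c).1 hc
        have hcz' : z⁻¹ * c = c * z⁻¹ := by
          have := congrArg (fun t => z⁻¹ * t * z⁻¹) hcz
          simpa [mul_assoc] using this.symm
        have hzg2 : z * g⁻¹ = g⁻¹ * z⁻¹ := by
          have h' := congrArg (·⁻¹) hzg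
          simp only [mul_inv_rev, inv_inv] at h'
          exact h'.symm
        calc z * (g⁻¹ * c * g) = (z * g⁻¹) * c * g := by simp [mul_assoc]
          _ = g⁻¹ * (z⁻¹ * c) * g := by rw [hzg2]; simp [mul_assoc]
          _ = g⁻¹ * c * (z⁻¹ * g) := by rw [hcz']; simp [mul_assoc]
          _ = g⁻¹ * c * (g * z) := by rw [hzg']
          _ = (g⁻¹ * c * g) * z := by simp [mul_assoc]
      -- conjugation dichotomy for the generator w of C
      have hw2 : g * w * g⁻¹ = w ∨ g * w * g⁻¹ = w⁻¹ := by
        refine aux_conj_dichotomy hwo ?_ ?_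
        · exact hCw _ (hgC w hwC)
        · exact hCw _ (hg'C w hwC)
      rcases hw2 with hgw | hgw
      · -- then g z g⁻¹ = z, contradicting g z g⁻¹ = z⁻¹ and z of infinite order
        have : g * z * g⁻¹ = z := by
          rw [← hj]
          calc g * w ^ j * g⁻¹ = (g * w * g⁻¹) ^ j := by
                simpa using (conj_zpow (i := j) (a := g) (b := w)).symm
            _ = w ^ j := by rw [hgw]
        rw [hbad] at this
        apply hzo
        refine isOfFinOrder_iff_pow_eq_one.2 ⟨2, by norm_num, ?_⟩
        have := congrArg (z * ·) this
        simpa [pow_two, mul_assoc] using this.symm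
      · -- g w g⁻¹ = w⁻¹ ; but g² ∈ C commutes with g
        have hg2C : g * g ∈ C := by
          rw [hmemC]
          calc z * (g * g) = (z * g) * g := by rw [mul_assoc]
            _ = g * (z⁻¹ * g) := by rw [hzg, mul_assoc]
            _ = g * (g * z) := by rw [hzg']
            _ = (g * g) * z := by rw [mul_assoc]
        obtain ⟨m, hm⟩ := hCw _ hg2C
        have hmm : g * w ^ m * g⁻¹ = w ^ (-m) := by
          calc g * w ^ m * g⁻¹ = (g * w * g⁻¹) ^ m := by
                simpa using (conj_zpow (i := m) (a := g) (b := w)).symm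
            _ = (w⁻¹) ^ m := by rw [hgw]
            _ = w ^ (-m) := by rw [inv_zpow, ← zpow_neg]
        have hfix : g * w ^ m * g⁻¹ = w ^ m := by
          rw [hm]
          have : g * (g * g) = (g * g) * g := by simp [mul_assoc]
          calc g * (g * g) * g⁻¹ = (g * g) * (g * g⁻¹) := by simp [mul_assoc]
            _ = g * g := by simp
        have hmzero : m = 0 := by
          have h0 : w ^ m = w ^ (-m) := by rw [← hfix, hmm]
          have hinjw : Function.Injective fun k : ℤ => w ^ k :=
            injective_zpow_iff_not_isOfFinOrder.2 hwo
          have := hinjw h0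
          omega
        have hgg : g * g = 1 := by rw [← hm, hmzero, zpow_zero]
        have hgone : g = 1 := by
          by_contra hgne
          apply htf g hgne
          exact isOfFinOrder_iff_pow_eq_one.2 ⟨2, by norm_num, by rw [pow_two]; exact hgg⟩
        rw [hgone] at hbad
        simp at hbad
        apply hzo
        refine isOfFinOrder_iff_pow_eq_one.2 ⟨2, by norm_num, ?_⟩
        have := congrArg (z * ·) hbad
        simpa [pow_two, mul_assoc] using this
  -- G is abelian
  have hGcomm : ∀ a b : G, a * b = b * a := by
    intro a b
    have := hCcomm ⟨a, hCtop a⟩ ⟨b, hCtop b⟩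
    simpa using congrArg Subtype.val this
  -- G is cyclic
  haveI hGcyc : IsCyclic G := by
    refine aux_cyclic hGcomm htf z hzo ?_
    rw [← hNzp]
    exact hNfi
  obtain ⟨u, hu⟩ := IsCyclic.exists_generator (α := G)
  have hu1 : u ≠ 1 := by
    intro h
    obtain ⟨k, hk⟩ := Subgroup.mem_zpowers_iff.1 (hu z)
    exact hz1 (by rw [← hk, h, one_zpow])
  have huo : ¬IsOfFinOrder u := htf u hu1
  set e : Multiplicative ℤ →* G := zpowersHom G u with he
  have hinj : Function.Injective e := by
    intro a b hab
    have : u ^ (Multiplicative.toAdd a) = u ^ (Multiplicative.toAdd b) := by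
      simpa [he, zpowersHom_apply] using hab
    have := (injective_zpow_iff_not_isOfFinOrder.2 huo) this
    exact Multiplicative.toAdd.injective this
  have hsurj : Function.Surjective e := by
    intro x
    obtain ⟨k, hk⟩ := Subgroup.mem_zpowers_iff.1 (hu x)
    exact ⟨Multiplicative.ofAdd k, by simpa [he, zpowersHom_apply] using hk⟩
  exact ⟨(MulEquiv.ofBijective e ⟨hinj, hsurj⟩).symm⟩
end

section
/- In the Baumslag–Solitar group G_{r,s} = ⟨a, b | a⁻¹bʳa = bˢ⟩ with r > 1 and |s| > 1, the elements a⁻¹ba and b do not commute. -/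
/-- The defining relator of the Baumslag–Solitar group `BS(r,s)`:
`a⁻¹ * bʳ * a * b⁻ˢ`, with `a` the generator `false` and `b` the generator `true`. -/
def bsRel (r s : ℤ) : FreeGroup Bool :=
  (FreeGroup.of false)⁻¹ * FreeGroup.of true ^ r * FreeGroup.of false *
    FreeGroup.of true ^ (-s)

/-- The Baumslag–Solitar group `BS(r,s) = ⟨a, b ∣ a⁻¹bʳa = bˢ⟩`. -/
abbrev BaumslagSolitar (r s : ℤ) : Type :=
  PresentedGroup ({bsRel r s} : Set (FreeGroup Bool))

namespace BSaux

/-- forward map of the permutation `A` of `ℤ × ℤ`. -/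
def Amap (r s : ℤ) (x : ℤ × ℤ) : ℤ × ℤ :=
  (r * (x.1 / s) + (|s| * x.2 + x.1 % s) % r,
   (|s| * x.2 + x.1 % s) / r + (|s| * x.2 + x.1 % s) % r)

/-- inverse map of the permutation `A` of `ℤ × ℤ`. -/
def Ainvmap (r s : ℤ) (y : ℤ × ℤ) : ℤ × ℤ :=
  (s * (y.1 / r) + (r * (y.2 - y.1 % r) + y.1 % r) % s,
   (r * (y.2 - y.1 % r) + y.1 % r) / |s|)

lemma emod_abs_eq (a b : ℤ) : a % |b| = a % b := by
  rcases abs_choice b with h | h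
  · rw [h]
  · rw [h, Int.emod_neg]

lemma emod_bounds {b : ℤ} (hb : b ≠ 0) (a : ℤ) : 0 ≤ a % b ∧ a % b < |b| := by
  refine ⟨Int.emod_nonneg a hb, ?_⟩
  rw [← emod_abs_eq]
  exact Int.emod_lt_of_pos a (abs_pos.2 hb)

/-- key decomposition lemma -/
lemma key {b : ℤ} (hb : b ≠ 0) (q i : ℤ) (h0 : 0 ≤ i) (h1 : i < |b|) :
    (b * q + i) % b = i ∧ (b * q + i) / b = q := by
  have h2 : (b * q + i) % b = i := by
    rw [add_comm, Int.add_mul_emod_self_left, ← emod_abs_eq]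
    exact Int.emod_eq_of_lt h0 h1
  refine ⟨h2, ?_⟩
  have h3 := Int.mul_ediv_add_emod (b * q + i) b
  rw [h2] at h3
  have h4 : b * ((b * q + i) / b) = b * q := by linarith
  exact mul_left_cancel₀ hb h4

section

set_option linter.unusedSectionVars false

variable {r s : ℤ} (hr : 1 < r) (hs : 1 < |s|)

include hr hs

lemma hr0 : r ≠ 0 := by omega
lemma hs0 : s ≠ 0 := by
  intro h; rw [h] at hs; simp at hs

lemma AinvA (x : ℤ × ℤ) : Ainvmap r s (Amap r s x) = x := by
  obtain ⟨n, m⟩ := x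
  have hr0 : r ≠ 0 := hr0 hr hs
  have hs0 : s ≠ 0 := hs0 hr hs
  have habs0 : |s| ≠ 0 := by simpa using hs0
  have hi := emod_bounds hs0 n
  set t := |s| * m + n % s with htdef
  have htm : t % |s| = n % s ∧ t / |s| = m := by
    refine key habs0 m (n % s) hi.1 ?_
    rw [abs_abs]; exact hi.2
  have hts : t % s = n % s := by rw [← emod_abs_eq]; exact htm.1
  have htr := emod_bounds hr0 t
  have hp : (r * (n / s) + t % r) % r = t % r ∧ (r * (n / s) + t % r) / r = n / s := by
    exact key hr0 (n / s) (t % r) htr.1 htr.2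
  show Ainvmap r s (r * (n / s) + t % r, t / r + t % r) = (n, m)
  rw [Ainvmap]
  simp only
  rw [hp.1, hp.2, add_sub_cancel_right, Int.mul_ediv_add_emod t r, hts,
    Int.mul_ediv_add_emod n s, htm.2]

lemma AAinv (y : ℤ × ℤ) : Amap r s (Ainvmap r s y) = y := by
  obtain ⟨p, k⟩ := y
  have hr0 : r ≠ 0 := hr0 hr hs
  have hs0 : s ≠ 0 := hs0 hr hs
  have habs0 : |s| ≠ 0 := by simpa using hs0
  have hj := emod_bounds hr0 p
  set u := r * (k - p % r) + p % r with hudef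
  have hu : u % r = p % r ∧ u / r = k - p % r :=
    key hr0 (k - p % r) (p % r) hj.1 hj.2
  have hus := emod_bounds hs0 u
  have hn : (s * (p / r) + u % s) % s = u % s ∧ (s * (p / r) + u % s) / s = p / r :=
    key hs0 (p / r) (u % s) hus.1 hus.2
  show Amap r s (s * (p / r) + u % s, u / |s|) = (p, k)
  rw [Amap]
  simp only
  rw [hn.1, hn.2]
  have ht : |s| * (u / |s|) + u % s = u := by
    rw [← emod_abs_eq u s]; exact Int.mul_ediv_add_emod u |s|
  rw [ht, hu.1, hu.2, Int.mul_ediv_add_emod p r]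
  simp only [Prod.mk.injEq]
  exact ⟨trivial, by ring⟩

/-- The permutation `A`. -/
def Aperm : Equiv.Perm (ℤ × ℤ) :=
  ⟨Amap r s, Ainvmap r s, AinvA hr hs, AAinv hr hs⟩

omit hr hs

/-- The permutation `B`. -/
def Bperm : Equiv.Perm (ℤ × ℤ) :=
  ⟨fun x => (x.1 + 1, x.2), fun x => (x.1 - 1, x.2),
   fun x => by simp, fun x => by simp⟩

lemma Bpow (kk : ℤ) : ∀ x : ℤ × ℤ, (Bperm ^ kk) x = (x.1 + kk, x.2) := by
  induction kk using Int.induction_on with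
  | zero => intro x; simp
  | succ n ih =>
      intro x
      rw [zpow_add_one, Equiv.Perm.mul_apply, ih (Bperm x)]
      show (x.1 + 1 + (n : ℤ), x.2) = (x.1 + ((n : ℤ) + 1), x.2)
      simp only [Prod.mk.injEq]
      exact ⟨by ring, trivial⟩
  | pred n ih =>
      intro x
      rw [zpow_sub_one, Equiv.Perm.mul_apply, ih (Bperm⁻¹ x)]
      show (x.1 - 1 + (-(n : ℤ)), x.2) = (x.1 + (-(n : ℤ) - 1), x.2)
      simp only [Prod.mk.injEq]
      exact ⟨by ring, trivial⟩

include hr hs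

lemma Amap_shift (x : ℤ × ℤ) :
    Amap r s (x.1 + s, x.2) = ((Amap r s x).1 + r, (Amap r s x).2) := by
  have hs0 : s ≠ 0 := hs0 hr hs
  have h1 : (x.1 + s) % s = x.1 % s := by
    rw [show x.1 + s = x.1 + s * 1 by ring, Int.add_mul_emod_self_left]
  have h2 : (x.1 + s) / s = x.1 / s + 1 := by
    rw [show x.1 + s = x.1 + 1 * s by ring, Int.add_mul_ediv_right _ _ hs0]
  rw [Amap, Amap]
  simp only [h1, h2, Prod.mk.injEq]
  exact ⟨by ring, trivial⟩

lemma relation :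
    (Aperm hr hs)⁻¹ * Bperm ^ r * Aperm hr hs * Bperm ^ (-s) = 1 := by
  apply Equiv.ext
  intro x
  simp only [Equiv.Perm.mul_apply, Equiv.Perm.one_apply]
  rw [Bpow, Bpow]
  have hA : ∀ z, Aperm hr hs z = Amap r s z := fun _ => rfl
  have hAi : ∀ z, (Aperm hr hs)⁻¹ z = Ainvmap r s z := fun _ => rfl
  rw [hA, hAi]
  have h1 : ((Amap r s (x.1 + -s, x.2)).1 + r, (Amap r s (x.1 + -s, x.2)).2)
      = Amap r s x := by
    have h2 := Amap_shift hr hs (x.1 + -s, x.2)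
    simp only [neg_add_cancel_right] at h2
    rw [← h2]
  rw [h1]
  exact AinvA hr hs x

-- arithmetic facts for the witness computation
lemma facts :
    (-1 : ℤ) % s = |s| - 1 ∧ (-2 : ℤ) % s = |s| - 2 ∧
    (-1 : ℤ) % r = r - 1 ∧ (-2 : ℤ) % r = r - 2 := by
  have hr0 : r ≠ 0 := hr0 hr hs
  have hs0 : s ≠ 0 := hs0 hr hs
  have habs0 : |s| ≠ 0 := by simpa using hs0
  have habs : |(|s|)| = |s| := abs_abs s
  have hrabs : |r| = r := abs_of_pos (by omega)
  refine ⟨?_, ?_, ?_, ?_⟩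
  · have h := (key habs0 (-1) (|s| - 1) (by omega) (by omega)).1
    rw [show |s| * (-1) + (|s| - 1) = (-1 : ℤ) by ring] at h
    rw [← emod_abs_eq, h]
  · have h := (key habs0 (-1) (|s| - 2) (by omega) (by omega)).1
    rw [show |s| * (-1) + (|s| - 2) = (-2 : ℤ) by ring] at h
    rw [← emod_abs_eq, h]
  · have h := (key hr0 (-1) (r - 1) (by omega) (by omega)).1
    rwa [show r * (-1) + (r - 1) = (-1 : ℤ) by ring] at h
  · have h := (key hr0 (-1) (r - 2) (by omega) (by omega)).1
    rwa [show r * (-1) + (r - 2) = (-2 : ℤ) by ring] at h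

lemma facts_div : (-1 : ℤ) / r = -1 ∧ (-2 : ℤ) / r = -1 := by
  have hr0 : r ≠ 0 := hr0 hr hs
  have hrabs : |r| = r := abs_of_pos (by omega)
  constructor
  · have h := (key hr0 (-1) (r - 1) (by omega) (by omega)).2
    rwa [show r * (-1) + (r - 1) = (-1 : ℤ) by ring] at h
  · have h := (key hr0 (-1) (r - 2) (by omega) (by omega)).2
    rwa [show r * (-1) + (r - 2) = (-2 : ℤ) by ring] at h

lemma Amap_m1 : Amap r s (-1, -1) = (r * ((-1) / s) + (r - 1), r - 2) := by
  rw [Amap]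
  simp only
  rw [show |s| * (-1 : ℤ) + (-1) % s = -1 by rw [(facts hr hs).1]; ring]
  rw [(facts hr hs).2.2.1, (facts_div hr hs).1]
  simp only [Prod.mk.injEq]
  exact ⟨trivial, by ring⟩

lemma Amap_m2 : Amap r s (-2, -1) = (r * ((-2) / s) + (r - 2), r - 3) := by
  rw [Amap]
  simp only
  rw [show |s| * (-1 : ℤ) + (-2) % s = -2 by rw [(facts hr hs).2.1]; ring]
  rw [(facts hr hs).2.2.2, (facts_div hr hs).2]
  simp only [Prod.mk.injEq]
  exact ⟨trivial, by ring⟩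

lemma noncomm : ¬ Commute ((Aperm hr hs)⁻¹ * Bperm * Aperm hr hs) Bperm := by
  intro h
  have hr0 : r ≠ 0 := hr0 hr hs
  have hs0 : s ≠ 0 := hs0 hr hs
  have h4 := congrArg (fun π : Equiv.Perm (ℤ × ℤ) => (π (-2, -1)).2) h.eq
  simp only [Equiv.Perm.mul_apply] at h4
  have hA : ∀ z, Aperm hr hs z = Amap r s z := fun _ => rfl
  -- left side value
  have key1 : ((Aperm hr hs)⁻¹ (Bperm (Aperm hr hs (Bperm (-2, -1))))).2
      = r * (r - 2) / |s| := by
    have c0 : Bperm ((-2 : ℤ), (-1 : ℤ)) = (-1, -1) := by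
      show ((-2 : ℤ) + 1, (-1 : ℤ)) = (-1, -1); norm_num
    rw [c0, hA, Amap_m1 hr hs]
    show (Ainvmap r s (r * (-1 / s) + (r - 1) + 1, r - 2)).2 = r * (r - 2) / |s|
    have e1 : (r * (-1 / s) + (r - 1) + 1) % r = 0 := by
      rw [show r * (-1 / s) + (r - 1) + 1 = r * (-1 / s + 1) by ring]
      exact Int.mul_emod_right r _
    rw [Ainvmap]
    simp only
    rw [e1]
    rw [show r * (r - 2 - 0) + 0 = r * (r - 2) by ring]
  -- right side value
  have key2 : (Bperm ((Aperm hr hs)⁻¹ (Bperm (Aperm hr hs (-2, -1))))).2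
      = -(r + 1) / |s| := by
    rw [hA, Amap_m2 hr hs]
    show (Ainvmap r s (r * (-2 / s) + (r - 2) + 1, r - 3)).2 = -(r + 1) / |s|
    have e2 : (r * (-2 / s) + (r - 2) + 1) % r = r - 1 := by
      rw [show r * (-2 / s) + (r - 2) + 1 = r * (-2 / s) + (r - 1) by ring]
      exact (key hr0 _ (r - 1) (by omega) (by rw [abs_of_pos (by omega : (0:ℤ) < r)]; omega)).1
    rw [Ainvmap]
    simp only
    rw [e2]
    rw [show r * (r - 3 - (r - 1)) + (r - 1) = -(r + 1) by ring]
  rw [key1, key2] at h4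
  have hL : 0 ≤ r * (r - 2) / |s| :=
    Int.ediv_nonneg (by nlinarith) (abs_nonneg s)
  have hR : -(r + 1) / |s| < 0 :=
    Int.ediv_neg_of_neg_of_pos (by omega) (by simpa [abs_pos] using hs0)
  omega

end

end BSaux

theorem stmt_15 (r s : ℤ) (hr : 1 < r) (hs : 1 < |s|) :
    ¬Commute
      ((PresentedGroup.of (rels := ({bsRel r s} : Set (FreeGroup Bool))) false)⁻¹ *
        PresentedGroup.of (rels := ({bsRel r s} : Set (FreeGroup Bool))) true *
        PresentedGroup.of (rels := ({bsRel r s} : Set (FreeGroup Bool))) false)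
      (PresentedGroup.of (rels := ({bsRel r s} : Set (FreeGroup Bool))) true) := by
  intro h
  classical
  set f : Bool → Equiv.Perm (ℤ × ℤ) :=
    fun b => if b then BSaux.Bperm else BSaux.Aperm hr hs with hf
  have hrels : ∀ w ∈ ({bsRel r s} : Set (FreeGroup Bool)), FreeGroup.lift f w = 1 := by
    intro w hw
    rw [Set.mem_singleton_iff] at hw
    subst hw
    rw [bsRel]
    simp only [map_mul, map_inv, map_zpow, FreeGroup.lift_apply_of, hf, if_true, if_false]
    exact BSaux.relation hr hs
  have h2 := h.map (PresentedGroup.toGroup hrels)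
  simp only [map_mul, map_inv, PresentedGroup.toGroup.of, hf, if_true, if_false] at h2
  exact BSaux.noncomm hr hs h2
end

section
/- The class of CSA-groups is closed under direct limits: if G* is the direct limit of a directed system of CSA-groups with injective transition maps, then G* is a CSA-group. -/
/-- Every abelian subgroup is contained in a maximal abelian subgroup (Zorn). -/
theorem exists_maximalAbelian {G : Type*} [Group G] (A : Subgroup G)
    (hA : IsMulCommutative A) : ∃ M : Subgroup G, IsMaximalAbelian M ∧ A ≤ M := by
  obtain ⟨M, hAM, hMs, hmax⟩ := zorn_le_nonempty₀
    {N : Subgroup G | IsMulCommutative N}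
    (fun c hcs hc y hy => by
      refine ⟨sSup c, ?_, fun z hz => le_sSup hz⟩
      have hdir : DirectedOn (· ≤ ·) c := hc.directedOn
      constructor
      constructor
      rintro ⟨a, ha⟩ ⟨b, hb⟩
      rw [Subgroup.mem_sSup_of_directedOn ⟨y, hy⟩ hdir] at ha hb
      obtain ⟨s, hs, has⟩ := ha
      obtain ⟨t, ht, hbt⟩ := hb
      obtain ⟨u, hu, hsu, htu⟩ := hdir s hs t ht
      have : a * b = b * a := by
        haveI : IsMulCommutative u := hcs hu
        exact Subgroup.mul_comm_of_mem_isMulCommutative (H := u) (hsu has) (htu hbt)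
      exact Subtype.ext this) A hA
  exact ⟨M, ⟨hMs, fun N hN hMN => le_antisymm (hmax hN hMN) hMN⟩, hAM⟩

/-- A CSA group is commutative-transitive. -/
theorem commTrans_of_isCSA {G : Type*} [Group G] (h : IsCSA G) : CommTrans G := by
  intro a b c ha hb hc hab hbc
  obtain ⟨M, hM, hbM⟩ := exists_maximalAbelian (Subgroup.zpowers b)
    (Subgroup.zpowers_isMulCommutative b)
  have hbM' : b ∈ M := hbM (Subgroup.mem_zpowers b)
  have key : ∀ z : G, z ≠ 1 → Commute z b → z ∈ M := by
    intro z hz hzb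
    by_contra hzM
    have : z⁻¹ * b * z = b := by
      rw [hzb.inv_left.eq]; group
    exact hb (h M hM z hzM b hbM' (by rw [this]; exact hbM'))
  have haM : a ∈ M := key a ha hab
  have hcM : c ∈ M := key c hc hbc.symm
  haveI := hM.1
  exact Subgroup.mul_comm_of_mem_isMulCommutative (H := M) haM hcM

/-- In a CSA group, commuting with one's conjugate forces commuting. -/
theorem conj_comm_of_isCSA {G : Type*} [Group G] (h : IsCSA G) :
    ∀ a x : G, a ≠ 1 → Commute (x⁻¹ * a * x) a → Commute x a := by
  intro a x ha hconj
  obtain ⟨M, hM, haM⟩ := exists_maximalAbelian (Subgroup.zpowers a)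
    (Subgroup.zpowers_isMulCommutative a)
  have haM' : a ∈ M := haM (Subgroup.mem_zpowers a)
  have hct := commTrans_of_isCSA h
  -- The centralizer of a is commutative and contains M, hence equals M
  have hcent : IsMulCommutative (Subgroup.centralizer {a}) := by
    constructor; constructor
    rintro ⟨u, hu⟩ ⟨v, hv⟩
    rw [Subgroup.mem_centralizer_singleton_iff] at hu hv
    have : u * v = v * u := by
      rcases eq_or_ne u 1 with rfl | hu1
      · simp
      rcases eq_or_ne v 1 with rfl | hv1
      · simp
      exact hct u a v hu1 ha hv1 hu hv.symm
    exact Subtype.ext this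
  have hMC : M ≤ Subgroup.centralizer {a} := by
    intro m hm
    rw [Subgroup.mem_centralizer_singleton_iff]
    haveI := hM.1
    exact Subgroup.mul_comm_of_mem_isMulCommutative (H := M) hm haM'
  have hCeq : Subgroup.centralizer {a} = M := hM.2 _ hcent hMC
  have hconjM : x⁻¹ * a * x ∈ M := by
    rw [← hCeq, Subgroup.mem_centralizer_singleton_iff]
    exact hconj.eq
  by_cases hxM : x ∈ M
  · have := hMC hxM
    rw [Subgroup.mem_centralizer_singleton_iff] at this
    exact this
  · exact absurd (h M hM x hxM a haM' hconjM) ha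

theorem stmt_16 {G : Type*} [Group G] {ι : Type*} (H : ι → Subgroup G)
    (hdir : Directed (· ≤ ·) H) (hcsa : ∀ i, IsCSA (H i))
    (hcover : ∀ g : G, ∃ i, g ∈ H i) : IsCSA G := by
  -- G is commutative-transitive
  have hct : CommTrans G := by
    intro a b c ha hb hc hab hbc
    obtain ⟨i, hai⟩ := hcover a
    obtain ⟨j, hbj⟩ := hcover b
    obtain ⟨k, hck⟩ := hcover c
    obtain ⟨l, hil, hjl⟩ := hdir i j
    obtain ⟨m, hlm, hkm⟩ := hdir l k
    have ha' : a ∈ H m := hlm (hil hai)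
    have hb' : b ∈ H m := hlm (hjl hbj)
    have hc' : c ∈ H m := hkm hck
    have := commTrans_of_isCSA (hcsa m) ⟨a, ha'⟩ ⟨b, hb'⟩ ⟨c, hc'⟩
      (fun h1 => ha (congrArg Subtype.val h1))
      (fun h1 => hb (congrArg Subtype.val h1))
      (fun h1 => hc (congrArg Subtype.val h1))
      (Subtype.ext hab.eq) (Subtype.ext hbc.eq)
    exact congrArg Subtype.val this.eq
  -- conjugation condition
  have hconj : ∀ a x : G, a ≠ 1 → Commute (x⁻¹ * a * x) a → Commute x a := by
    intro a x ha hc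
    obtain ⟨i, hai⟩ := hcover a
    obtain ⟨j, hxj⟩ := hcover x
    obtain ⟨k, hik, hjk⟩ := hdir i j
    have ha' : a ∈ H k := hik hai
    have hx' : x ∈ H k := hjk hxj
    have := conj_comm_of_isCSA (hcsa k) ⟨a, ha'⟩ ⟨x, hx'⟩
      (fun h1 => ha (congrArg Subtype.val h1))
      (Subtype.ext hc.eq)
    exact congrArg Subtype.val this.eq
  -- conclude CSA
  intro M hM x hxM g hgM hconjg
  by_contra hg
  haveI := hM.1
  have hxg : Commute x g := hconj g x hg
    (Subgroup.mul_comm_of_mem_isMulCommutative (H := M) hconjg hgM)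
  -- centralizer of g is commutative, contains M, so equals M; then x ∈ M
  have hcent : IsMulCommutative (Subgroup.centralizer {g}) := by
    constructor; constructor
    rintro ⟨u, hu⟩ ⟨v, hv⟩
    rw [Subgroup.mem_centralizer_singleton_iff] at hu hv
    have : u * v = v * u := by
      rcases eq_or_ne u 1 with rfl | hu1
      · simp
      rcases eq_or_ne v 1 with rfl | hv1
      · simp
      exact hct u g v hu1 hg hv1 hu hv.symm
    exact Subtype.ext this
  have hMC : M ≤ Subgroup.centralizer {g} := by
    intro m hm
    rw [Subgroup.mem_centralizer_singleton_iff]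
    exact Subgroup.mul_comm_of_mem_isMulCommutative (H := M) hm hgM
  have hCeq : Subgroup.centralizer {g} = M := hM.2 _ hcent hMC
  exact hxM (hCeq ▸ (Subgroup.mem_centralizer_singleton_iff.mpr hxg.eq))
end
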